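/- Let α be the sequence with α_0=2 and α_m=3 for m≥1, and let β be the constant sequence β_m=1 for all m≥0. Then for every n≥1, Dyck_n(d) = Mot_{n-1}(α,β). -/

import Mathlib

/-- A step of a Motzkin path: up `(1,1)`, down `(1,-1)`, or horizontal `(1,0)`. -/
inductive MStep : Type
  | up : MStep
  | down : MStep
  | flat : MStep
  deriving DecidableEq

instance instFintypeMStep : Fintype MStep :=
  ⟨{MStep.up, MStep.down, MStep.flat}, fun x => by cases x <;> simp⟩

/-- The vertical displacement of a Motzkin step. -/
def MStep.val : MStep → ℤ
  | .up => 1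
  | .down => -1
  | .flat => 0

/-- The height of the path after its first `k` steps. -/
def mHeight (l : List MStep) (k : ℕ) : ℤ := ((l.take k).map MStep.val).sum

/-- A list of steps is a Motzkin path if it never goes below the x-axis and ends at height 0. -/
def IsMotzkin (l : List MStep) : Prop :=
  (∀ k : ℕ, 0 ≤ mHeight l k) ∧ mHeight l l.length = 0

/-- The weight of a Motzkin path w.r.t. `(b, lam)`: a factor `b i` for every horizontal step
of height `i` and a factor `lam i` for every down step of height `i` (the height of a step
being the `y`-coordinate of its ending point). -/
def mWeight (b lam : ℕ → ℚ) (l : List MStep) : ℚ :=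
  ∏ i ∈ Finset.range l.length,
    match l.getD i MStep.up with
    | .up => 1
    | .flat => b (mHeight l (i + 1)).toNat
    | .down => lam (mHeight l (i + 1)).toNat

open Classical in
/-- `Mot_n(b,lam)`: the sum of the weights of all Motzkin paths of length `n`. -/
noncomputable def motSum (n : ℕ) (b lam : ℕ → ℚ) : ℚ :=
  ∑ f : Fin n → MStep,
    if IsMotzkin (List.ofFn f) then mWeight b lam (List.ofFn f) else 0

/-- A step of a Dyck path: up `(1,1)` or down `(1,-1)`. -/
inductive DStep : Type
  | up : DStep
  | down : DStep
  deriving DecidableEq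

instance instFintypeDStep : Fintype DStep :=
  ⟨{DStep.up, DStep.down}, fun x => by cases x <;> simp⟩

/-- The vertical displacement of a Dyck step. -/
def DStep.val : DStep → ℤ
  | .up => 1
  | .down => -1

/-- The height of the path after its first `k` steps. -/
def dHeight (l : List DStep) (k : ℕ) : ℤ := ((l.take k).map DStep.val).sum

/-- A list of steps is a Dyck path if it never goes below the x-axis and ends at height 0. -/
def IsDyck (l : List DStep) : Prop :=
  (∀ k : ℕ, 0 ≤ dHeight l k) ∧ dHeight l l.length = 0

/-- The weight of a Dyck path w.r.t. `c`: a factor `c i` for every down step of height `i`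
(the height of a step being the `y`-coordinate of its ending point). -/
def dWeight (c : ℕ → ℚ) (l : List DStep) : ℚ :=
  ∏ i ∈ Finset.range l.length,
    match l.getD i DStep.up with
    | .up => 1
    | .down => c (dHeight l (i + 1)).toNat

open Classical in
/-- `Dyck_n(c)`: the sum of the weights of all Dyck paths of length `2n`. -/
noncomputable def dyckSum (n : ℕ) (c : ℕ → ℚ) : ℚ :=
  ∑ f : Fin (2 * n) → DStep,
    if IsDyck (List.ofFn f) then dWeight c (List.ofFn f) else 0

/-- Fibonacci numbers extended to all integer indices:
`fibZ 0 = 0`, `fibZ 1 = 1`, `fibZ m = fibZ (m-1) + fibZ (m-2)` (so `fibZ (-1) = 1`). -/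
def fibZ : ℤ → ℤ
  | Int.ofNat n => Nat.fib n
  | Int.negSucc n => (-1) ^ n * Nat.fib (n + 1)

namespace DMAux

abbrev P := DStep × DStep

def pi2 : P → MStep
  | (.up, .up) => .up
  | (.down, .down) => .down
  | (.up, .down) => .flat
  | (.down, .up) => .flat

def dp : P := (.up, .up)

def expand : List P → List DStep
  | [] => []
  | p :: t => p.1 :: p.2 :: expand t

@[simp] lemma expand_nil : expand [] = [] := rfl
@[simp] lemma expand_cons (p : P) (t : List P) :
    expand (p :: t) = p.1 :: p.2 :: expand t := rfl

@[simp] lemma length_expand (gl : List P) : (expand gl).length = 2 * gl.length := by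
  induction gl with
  | nil => rfl
  | cons p t ih => simp [ih]; ring

/-! ### height basics -/

@[simp] lemma dHeight_zero (l : List DStep) : dHeight l 0 = 0 := rfl
@[simp] lemma mHeight_zero (l : List MStep) : mHeight l 0 = 0 := rfl
@[simp] lemma dHeight_nil (k : ℕ) : dHeight [] k = 0 := by simp [dHeight]
@[simp] lemma mHeight_nil (k : ℕ) : mHeight [] k = 0 := by simp [mHeight]

lemma dHeight_cons (x : DStep) (l : List DStep) (k : ℕ) :
    dHeight (x :: l) (k + 1) = x.val + dHeight l k := by
  simp [dHeight, List.take_succ_cons]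

lemma mHeight_cons (x : MStep) (l : List MStep) (k : ℕ) :
    mHeight (x :: l) (k + 1) = x.val + mHeight l k := by
  simp [mHeight, List.take_succ_cons]

lemma dHeight_of_length_le (l : List DStep) {k : ℕ} (h : l.length ≤ k) :
    dHeight l k = dHeight l l.length := by
  simp [dHeight, List.take_of_length_le h, List.take_of_length_le le_rfl]

lemma mHeight_of_length_le (l : List MStep) {k : ℕ} (h : l.length ≤ k) :
    mHeight l k = mHeight l l.length := by
  simp [mHeight, List.take_of_length_le h, List.take_of_length_le le_rfl]

lemma dHeight_append_left (l₁ l₂ : List DStep) {k : ℕ} (h : k ≤ l₁.length) :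
    dHeight (l₁ ++ l₂) k = dHeight l₁ k := by
  simp [dHeight, List.take_append_of_le_length h]

lemma dHeight_snoc_full (l : List DStep) (x : DStep) :
    dHeight (l ++ [x]) (l.length + 1) = dHeight l l.length + x.val := by
  have h : (l ++ [x]).length ≤ l.length + 1 := by simp
  simp [dHeight, List.take_of_length_le h, List.take_of_length_le (le_refl l.length)]

lemma mHeight_succ_getD (l : List MStep) {i : ℕ} (h : i < l.length) :
    mHeight l (i + 1) = mHeight l i + (l.getD i .up).val := by
  have ht : l.take (i+1) = l.take i ++ [l.getD i .up] := by
    rw [List.take_succ, List.getElem?_eq_getElem h, List.getD_eq_getElem l _ h]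
    rfl
  simp [mHeight, ht]

/-! ### expand heights -/

lemma dHeight_expand_even (gl : List P) (i : ℕ) :
    dHeight (expand gl) (2 * i) = 2 * mHeight (gl.map pi2) i := by
  induction gl generalizing i with
  | nil => simp
  | cons p t ih =>
    cases i with
    | zero => simp
    | succ j =>
      have h2 : 2 * (j + 1) = (2 * j + 1) + 1 := by ring
      rw [h2, expand_cons, dHeight_cons, dHeight_cons, ih, List.map_cons, mHeight_cons]
      have : p.1.val + p.2.val = 2 * (pi2 p).val := by
        rcases p with ⟨a, b⟩; cases a <;> cases b <;> rfl
      linarith [this]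

lemma dHeight_expand_odd (gl : List P) {i : ℕ} (h : i < gl.length) :
    dHeight (expand gl) (2 * i + 1) = 2 * mHeight (gl.map pi2) i + (gl.getD i dp).1.val := by
  induction gl generalizing i with
  | nil => simp at h
  | cons p t ih =>
    cases i with
    | zero => simp [dHeight_cons]
    | succ j =>
      have hj : j < t.length := by simpa using h
      have h2 : 2 * (j + 1) + 1 = (2 * j + 1) + 1 + 1 := by ring
      rw [h2, expand_cons, dHeight_cons, dHeight_cons, ih hj, List.map_cons, mHeight_cons,
        List.getD_cons_succ]
      have : p.1.val + p.2.val = 2 * (pi2 p).val := by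
        rcases p with ⟨a, b⟩; cases a <;> cases b <;> rfl
      linarith [this]

end DMAux
namespace DMAux

/-- The assembled Dyck path. -/
def Fl (gl : List P) : List DStep := DStep.up :: (expand gl ++ [DStep.down])

@[simp] lemma length_Fl (gl : List P) : (Fl gl).length = 2 * gl.length + 2 := by
  simp [Fl, Nat.mul_succ]

lemma dHeight_Fl_odd (gl : List P) {i : ℕ} (h : i ≤ gl.length) :
    dHeight (Fl gl) (2 * i + 1) = 2 * mHeight (gl.map pi2) i + 1 := by
  have h1 : dHeight (Fl gl) (2 * i + 1) = 1 + dHeight (expand gl ++ [DStep.down]) (2 * i) := by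
    rw [Fl, dHeight_cons]; rfl
  rw [h1, dHeight_append_left _ _ (by simp; omega), dHeight_expand_even]
  ring

lemma dHeight_Fl_even (gl : List P) {i : ℕ} (h : i < gl.length) :
    dHeight (Fl gl) (2 * i + 2) = 2 * mHeight (gl.map pi2) i + 1 + (gl.getD i dp).1.val := by
  have h1 : dHeight (Fl gl) (2 * i + 2) = 1 + dHeight (expand gl ++ [DStep.down]) (2 * i + 1) := by
    rw [Fl, dHeight_cons]; rfl
  rw [h1, dHeight_append_left _ _ (by simp; omega), dHeight_expand_odd gl h]
  ring

lemma dHeight_Fl_last (gl : List P) :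
    dHeight (Fl gl) (2 * gl.length + 2) = 2 * mHeight (gl.map pi2) gl.length := by
  have h1 : dHeight (Fl gl) (2 * gl.length + 2)
      = 1 + dHeight (expand gl ++ [DStep.down]) (2 * gl.length + 1) := by
    rw [Fl, dHeight_cons]; rfl
  have h2 : dHeight (expand gl ++ [DStep.down]) (2 * gl.length + 1)
      = dHeight (expand gl) (2 * gl.length) + DStep.down.val := by
    have := dHeight_snoc_full (expand gl) DStep.down
    rwa [length_expand] at this
  rw [h1, h2, dHeight_expand_even]
  show (1 : ℤ) + (_ + (-1)) = _
  ring

lemma val_ge (s : DStep) : -1 ≤ s.val := by cases s <;> simp [DStep.val]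

lemma isDyck_Fl_iff (gl : List P) : IsDyck (Fl gl) ↔ IsMotzkin (gl.map pi2) := by
  constructor
  · rintro ⟨hnn, hend⟩
    rw [length_Fl] at hend
    have hK : mHeight (gl.map pi2) gl.length = 0 := by
      have := dHeight_Fl_last gl; omega
    constructor
    · intro i
      by_cases hi : i ≤ gl.length
      · have := hnn (2 * i + 1)
        rw [dHeight_Fl_odd gl hi] at this
        omega
      · rw [mHeight_of_length_le _ (by simp; omega)]
        simp only [List.length_map]
        omega
    · rw [List.length_map]; exact hK
  · rintro ⟨mnn, mend⟩
    rw [List.length_map] at mend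
    constructor
    · intro k
      rcases Nat.lt_or_ge k (2 * gl.length + 2) with hk | hk
      · rcases Nat.even_or_odd k with ⟨j, hj⟩ | ⟨j, hj⟩
        · rcases Nat.eq_zero_or_pos j with rfl | hj0
          · subst hj; simp
          · obtain ⟨i, rfl⟩ : ∃ i, j = i + 1 := ⟨j - 1, by omega⟩
            have hk' : k = 2 * i + 2 := by omega
            have hi : i < gl.length := by omega
            rw [hk', dHeight_Fl_even gl hi]
            have := mnn i
            have := val_ge (gl.getD i dp).1
            omega
        · have hi : j ≤ gl.length := by omega
          rw [hj, show 2 * j + 1 = 2 * j + 1 from rfl, dHeight_Fl_odd gl hi]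
          have := mnn j
          omega
      · rw [dHeight_of_length_le _ (by simp; omega), length_Fl, dHeight_Fl_last, mend]
        simp
    · rw [length_Fl, dHeight_Fl_last, mend]
      simp

end DMAux
namespace DMAux

lemma getD_expand_fst (gl : List P) {i : ℕ} (h : i < gl.length) :
    (expand gl).getD (2 * i) DStep.up = (gl.getD i dp).1 := by
  induction gl generalizing i with
  | nil => simp at h
  | cons p t ih =>
    cases i with
    | zero => simp
    | succ j =>
      have hj : j < t.length := by simpa using h
      have e : 2 * (j + 1) = (2 * j) + 1 + 1 := by ring
      rw [e, expand_cons, List.getD_cons_succ, List.getD_cons_succ, List.getD_cons_succ, ih hj]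

lemma getD_expand_snd (gl : List P) {i : ℕ} (h : i < gl.length) :
    (expand gl).getD (2 * i + 1) DStep.up = (gl.getD i dp).2 := by
  induction gl generalizing i with
  | nil => simp at h
  | cons p t ih =>
    cases i with
    | zero => simp
    | succ j =>
      have hj : j < t.length := by simpa using h
      have e : 2 * (j + 1) + 1 = (2 * j + 1) + 1 + 1 := by ring
      rw [e, expand_cons, List.getD_cons_succ, List.getD_cons_succ, List.getD_cons_succ, ih hj]

lemma getD_Fl_zero (gl : List P) : (Fl gl).getD 0 DStep.up = DStep.up := rfl

lemma getD_Fl_odd (gl : List P) {i : ℕ} (h : i < gl.length) :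
    (Fl gl).getD (2 * i + 1) DStep.up = (gl.getD i dp).1 := by
  rw [Fl, List.getD_cons_succ, List.getD_append _ _ _ _ (by simp; omega), getD_expand_fst gl h]

lemma getD_Fl_even (gl : List P) {i : ℕ} (h : i < gl.length) :
    (Fl gl).getD (2 * i + 2) DStep.up = (gl.getD i dp).2 := by
  have e : 2 * i + 2 = (2 * i + 1) + 1 := rfl
  rw [Fl, e, List.getD_cons_succ, List.getD_append _ _ _ _ (by simp; omega), getD_expand_snd gl h]

lemma getD_Fl_last (gl : List P) :
    (Fl gl).getD (2 * gl.length + 1) DStep.up = DStep.down := by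
  rw [Fl, List.getD_cons_succ, List.getD_append_right _ _ _ _ (by simp)]
  simp

/-- pairing for products over `range (2*K)` -/
lemma prod_range_two_mul (K : ℕ) (g : ℕ → ℚ) :
    ∏ j ∈ Finset.range (2 * K), g j = ∏ i ∈ Finset.range K, (g (2 * i) * g (2 * i + 1)) := by
  induction K with
  | zero => simp
  | succ k ih =>
    have e : 2 * (k + 1) = (2 * k) + 1 + 1 := by ring
    rw [e, Finset.prod_range_succ, Finset.prod_range_succ, ih, Finset.prod_range_succ]
    ring

end DMAux
namespace DMAux

/-- The weight of one pair of Dyck steps, given the Motzkin height after the pair. -/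
def pw (c : ℕ → ℚ) : P → ℕ → ℚ
  | (.up, .up), _ => 1
  | (.down, .down), h => c (2 * h + 2) * c (2 * h + 1)
  | (.up, .down), h => c (2 * h + 1)
  | (.down, .up), h => c (2 * h)

def dfac (c : ℕ → ℚ) (l : List DStep) (j : ℕ) : ℚ :=
  match l.getD j DStep.up with
  | .up => 1
  | .down => c (dHeight l (j + 1)).toNat

lemma dWeight_eq (c : ℕ → ℚ) (l : List DStep) :
    dWeight c l = ∏ j ∈ Finset.range l.length, dfac c l j := rfl

lemma getD_map_pi2 (gl : List P) (i : ℕ) :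
    (gl.map pi2).getD i MStep.up = pi2 (gl.getD i dp) := by
  have : MStep.up = pi2 dp := rfl
  rw [this, List.getD_map]

lemma dWeight_Fl (c : ℕ → ℚ) (gl : List P) (hM : IsMotzkin (gl.map pi2)) (hc0 : c 0 = 1) :
    dWeight c (Fl gl) =
      ∏ i ∈ Finset.range gl.length,
        pw c (gl.getD i dp) ((mHeight (gl.map pi2) (i + 1)).toNat) := by
  obtain ⟨mnn, mend⟩ := hM
  rw [List.length_map] at mend
  rw [dWeight_eq, length_Fl, Finset.prod_range_succ', Finset.prod_range_succ,
    prod_range_two_mul]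
  have hlast : dfac c (Fl gl) (2 * gl.length + 1) = 1 := by
    unfold dfac
    rw [getD_Fl_last]
    show c (dHeight (Fl gl) (2 * gl.length + 2)).toNat = 1
    rw [dHeight_Fl_last, mend]
    simpa using hc0
  have hzero : dfac c (Fl gl) 0 = 1 := by unfold dfac; rw [getD_Fl_zero]
  rw [hlast, hzero, mul_one, mul_one]
  apply Finset.prod_congr rfl
  intro i hi
  have hi' : i < gl.length := Finset.mem_range.mp hi
  have hsucc : mHeight (gl.map pi2) (i + 1)
      = mHeight (gl.map pi2) i + (pi2 (gl.getD i dp)).val := by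
    rw [mHeight_succ_getD _ (by simpa using hi'), getD_map_pi2]
  have h1 : 0 ≤ mHeight (gl.map pi2) i := mnn i
  have h2 : 0 ≤ mHeight (gl.map pi2) (i + 1) := mnn (i + 1)
  have hfacA : dfac c (Fl gl) (2 * i + 1)
      = match (gl.getD i dp).1 with
        | .up => 1
        | .down => c (dHeight (Fl gl) (2 * i + 2)).toNat := by
    unfold dfac; rw [getD_Fl_odd gl hi']
  have hfacB : dfac c (Fl gl) (2 * i + 2)
      = match (gl.getD i dp).2 with
        | .up => 1
        | .down => c (dHeight (Fl gl) (2 * i + 3)).toNat := by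
    unfold dfac; rw [getD_Fl_even gl hi']
  have hhA : dHeight (Fl gl) (2 * i + 2)
      = 2 * mHeight (gl.map pi2) i + 1 + (gl.getD i dp).1.val := dHeight_Fl_even gl hi'
  have hhB : dHeight (Fl gl) (2 * i + 3) = 2 * mHeight (gl.map pi2) (i + 1) + 1 := by
    have e : 2 * i + 3 = 2 * (i + 1) + 1 := by ring
    rw [e, dHeight_Fl_odd gl (by omega)]
  rw [hfacA, hfacB]
  rcases hp : gl.getD i dp with ⟨a, b⟩
  rw [hp] at hsucc hhA
  cases a <;> cases b
  · simp [pw]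
  · simp only [pw, pi2, MStep.val] at hsucc ⊢
    rw [hhB, one_mul]
    congr 1
    omega
  · simp only [pw, pi2, DStep.val, MStep.val] at hsucc hhA ⊢
    rw [hhA, mul_one]
    congr 1
    omega
  · simp only [pw, pi2, DStep.val, MStep.val] at hsucc hhA ⊢
    have e1 : (2 * mHeight (gl.map pi2) i + 1 + -1).toNat
        = 2 * (mHeight (gl.map pi2) (i + 1)).toNat + 2 := by omega
    have e2 : (2 * mHeight (gl.map pi2) (i + 1) + 1).toNat
        = 2 * (mHeight (gl.map pi2) (i + 1)).toNat + 1 := by omega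
    rw [hhA, hhB, e1, e2]

end DMAux
namespace DMAux

lemma fibZ_coe (n : ℕ) : fibZ n = Nat.fib n := rfl

lemma fibZ_neg_one : fibZ (-1) = 1 := rfl

lemma fibZ_pos_odd (h : ℕ) : 0 < fibZ (2 * (h : ℤ) - 1) := by
  cases h with
  | zero => simp [fibZ_neg_one]
  | succ j =>
    have e : 2 * ((j + 1 : ℕ) : ℤ) - 1 = ((2 * j + 1 : ℕ) : ℤ) := by push_cast; ring
    rw [e, fibZ_coe]
    exact_mod_cast Nat.fib_pos.mpr (by omega)

lemma fib3 (h : ℕ) (hh : 1 ≤ h) :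
    fibZ (2 * (h : ℤ) + 1) + fibZ (2 * (h : ℤ) - 3) = 3 * fibZ (2 * (h : ℤ) - 1) := by
  rcases Nat.lt_or_ge h 2 with h2 | h2
  · interval_cases h
    · decide
  · obtain ⟨j, rfl⟩ : ∃ j, h = j + 2 := ⟨h - 2, by omega⟩
    have e1 : 2 * ((j + 2 : ℕ) : ℤ) + 1 = ((2 * j + 5 : ℕ) : ℤ) := by push_cast; ring
    have e2 : 2 * ((j + 2 : ℕ) : ℤ) - 3 = ((2 * j + 1 : ℕ) : ℤ) := by push_cast; ring
    have e3 : 2 * ((j + 2 : ℕ) : ℤ) - 1 = ((2 * j + 3 : ℕ) : ℤ) := by push_cast; ring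
    rw [e1, e2, e3, fibZ_coe, fibZ_coe, fibZ_coe]
    have key : Nat.fib (2 * j + 5) + Nat.fib (2 * j + 1) = 3 * Nat.fib (2 * j + 3) := by
      have a1 := Nat.fib_add_two (n := 2 * j + 1)
      have a2 := Nat.fib_add_two (n := 2 * j + 2)
      have a3 := Nat.fib_add_two (n := 2 * j + 3)
      simp only [show 2 * j + 1 + 1 = 2 * j + 2 from rfl, show 2 * j + 2 + 1 = 2 * j + 3 from rfl,
        show 2 * j + 3 + 1 = 2 * j + 4 from rfl, show 2 * j + 1 + 2 = 2 * j + 3 from rfl,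
        show 2 * j + 2 + 2 = 2 * j + 4 from rfl, show 2 * j + 3 + 2 = 2 * j + 5 from rfl]
        at a1 a2 a3
      omega
    exact_mod_cast key

section
variable (d : ℕ → ℚ) (hd0 : d 0 = 1)
    (hdodd : ∀ m : ℕ, 1 ≤ m →
      d (2 * m - 1) = (fibZ (2 * (m : ℤ) - 1) : ℚ) / (fibZ (2 * (m : ℤ) - 3) : ℚ))
    (hdeven : ∀ m : ℕ, 1 ≤ m →
      d (2 * m) = (fibZ (2 * (m : ℤ) - 3) : ℚ) / (fibZ (2 * (m : ℤ) - 1) : ℚ))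

include hdodd hdeven in
lemma d_downpair (h : ℕ) : d (2 * h + 2) * d (2 * h + 1) = 1 := by
  have hA : (0 : ℚ) < (fibZ (2 * (h : ℤ) - 1) : ℚ) := by exact_mod_cast fibZ_pos_odd h
  have hB : (0 : ℚ) < (fibZ (2 * (h : ℤ) + 1) : ℚ) := by
    have := fibZ_pos_odd (h + 1)
    have e : 2 * ((h + 1 : ℕ) : ℤ) - 1 = 2 * (h : ℤ) + 1 := by push_cast; ring
    rw [e] at this
    exact_mod_cast this
  have e1 := hdodd (h + 1) (by omega)
  have e2 := hdeven (h + 1) (by omega)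
  have n1 : 2 * (h + 1) - 1 = 2 * h + 1 := by omega
  have n2 : 2 * (h + 1) = 2 * h + 2 := by ring
  have z1 : 2 * ((h + 1 : ℕ) : ℤ) - 1 = 2 * (h : ℤ) + 1 := by push_cast; ring
  have z2 : 2 * ((h + 1 : ℕ) : ℤ) - 3 = 2 * (h : ℤ) - 1 := by push_cast; ring
  rw [n1, z1, z2] at e1
  rw [n2, z1, z2] at e2
  rw [e1, e2]
  field_simp

include hd0 hdodd hdeven in
lemma d_flat (h : ℕ) : d (2 * h + 1) + d (2 * h) = if h = 0 then 2 else 3 := by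
  cases h with
  | zero =>
    have e1 := hdodd 1 (by omega)
    norm_num at e1
    rw [show fibZ 1 = 1 from rfl, show fibZ (-1) = 1 from rfl] at e1
    norm_num at e1 ⊢
    rw [e1, hd0]
    norm_num
  | succ j =>
    set h := j + 1 with hh
    have hA : (0 : ℚ) < (fibZ (2 * (h : ℤ) - 1) : ℚ) := by exact_mod_cast fibZ_pos_odd h
    have e1 := hdodd (h + 1) (by omega)
    have e2 := hdeven h (by omega)
    have n1 : 2 * (h + 1) - 1 = 2 * h + 1 := by omega
    have z1 : 2 * ((h + 1 : ℕ) : ℤ) - 1 = 2 * (h : ℤ) + 1 := by push_cast; ring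
    have z2 : 2 * ((h + 1 : ℕ) : ℤ) - 3 = 2 * (h : ℤ) - 1 := by push_cast; ring
    rw [n1, z1, z2] at e1
    rw [e1, e2]
    rw [← add_div, if_neg (by omega)]
    rw [div_eq_iff (ne_of_gt hA)]
    have := fib3 h (by omega)
    push_cast
    exact_mod_cast by exact_mod_cast congrArg (fun z : ℤ => (z : ℚ)) this
end

end DMAux
namespace DMAux

lemma sum_DStep (f : DStep → ℚ) : ∑ s : DStep, f s = f .up + f .down := by
  have : (Finset.univ : Finset DStep) = {DStep.up, DStep.down} := by decide
  rw [this, Finset.sum_insert (by decide), Finset.sum_singleton]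

lemma getD_ofFn {α : Type} {K : ℕ} (f : Fin K → α) (d0 : α) (i : Fin K) :
    (List.ofFn f).getD (i : ℕ) d0 = f i := by
  rw [List.getD_eq_getElem _ _ (by simp)]
  simp

lemma prod_sum_exchange {γ : Type} [Fintype γ] :
    ∀ (K : ℕ) (q : Fin K → γ → ℚ),
    (∏ i : Fin K, ∑ x : γ, q i x) = ∑ c : Fin K → γ, ∏ i : Fin K, q i (c i) := by
  intro K
  induction K with
  | zero =>
    intro q
    simp
  | succ k ih =>
    intro q
    rw [Fin.prod_univ_succ, ih (fun i x => q i.succ x)]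
    rw [show (∑ c : Fin (k + 1) → γ, ∏ i, q i (c i))
        = ∑ p : γ × (Fin k → γ), q 0 p.1 * ∏ i : Fin k, q i.succ (p.2 i) from
      Fintype.sum_equiv (Fin.consEquiv fun _ : Fin (k + 1) => γ).symm _ _
        (fun c => by rw [Fin.prod_univ_succ]; rfl)]
    rw [Fintype.sum_prod_type]
    rw [Finset.sum_mul]
    apply Finset.sum_congr rfl
    intro x _
    rw [Finset.mul_sum]

lemma sum_ofFn_succ {α : Type} [Fintype α] (j : ℕ) (T : List α → ℚ) :
    ∑ f : Fin (j + 1) → α, T (List.ofFn f)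
      = ∑ a : α, ∑ f : Fin j → α, T (a :: List.ofFn f) := by
  rw [Fintype.sum_equiv (Fin.consEquiv fun _ : Fin (j + 1) => α).symm (fun f => T (List.ofFn f))
    (fun p => T (p.1 :: List.ofFn p.2)) (fun f => by simp only [List.ofFn_succ]; rfl)]
  rw [Fintype.sum_prod_type]

lemma sum_pairs : ∀ (K : ℕ) (T : List DStep → ℚ),
    ∑ f : Fin (2 * K + 1) → DStep, T (List.ofFn f)
      = ∑ g : Fin K → P, ∑ b : DStep, T (expand (List.ofFn g) ++ [b]) := by
  intro K
  induction K with
  | zero =>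
    intro T
    rw [show (2 * 0 + 1) = 0 + 1 from rfl, sum_ofFn_succ 0 T]
    simp [List.ofFn_zero]
  | succ k ih =>
    intro T
    rw [show (2 * (k + 1) + 1) = (2 * k + 1 + 1) + 1 from rfl,
      sum_ofFn_succ (2 * k + 1 + 1) T]
    have step2 : ∀ a : DStep,
        (∑ f : Fin (2 * k + 1 + 1) → DStep, T (a :: List.ofFn f))
          = ∑ a2 : DStep, ∑ g : Fin k → P, ∑ b : DStep,
              T (a :: a2 :: (expand (List.ofFn g) ++ [b])) := by
      intro a
      rw [sum_ofFn_succ (2 * k + 1) (fun l => T (a :: l))]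
      apply Finset.sum_congr rfl
      intro a2 _
      rw [ih (fun l => T (a :: a2 :: l))]
    rw [Finset.sum_congr rfl (fun a (_ : a ∈ Finset.univ) => step2 a)]
    rw [show (∑ g : Fin (k + 1) → P, ∑ b : DStep, T (expand (List.ofFn g) ++ [b]))
        = ∑ p : P × (Fin k → P), ∑ b : DStep,
            T (p.1.1 :: p.1.2 :: (expand (List.ofFn p.2) ++ [b])) from
      Fintype.sum_equiv (Fin.consEquiv fun _ : Fin (k + 1) => P).symm _ _
        (fun g => by rw [List.ofFn_succ]; rfl)]
    rw [Fintype.sum_prod_type]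
    rw [Fintype.sum_prod_type]

lemma not_isDyck_down_head (l : List DStep) : ¬ IsDyck (DStep.down :: l) := by
  rintro ⟨hnn, -⟩
  have h := hnn 1
  rw [show (1 : ℕ) = 0 + 1 from rfl, dHeight_cons] at h
  simp [DStep.val] at h

lemma not_isDyck_up_last (l : List DStep) : ¬ IsDyck (l ++ [DStep.up]) := by
  rintro ⟨hnn, hend⟩
  have h1 := hnn l.length
  rw [dHeight_append_left _ _ le_rfl] at h1
  have h2 : dHeight (l ++ [DStep.up]) (l.length + 1) = dHeight l l.length + 1 := by
    have := dHeight_snoc_full l DStep.up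
    simpa [DStep.val] using this
  rw [show (l ++ [DStep.up]).length = l.length + 1 by simp, h2] at hend
  omega

lemma ite_sum {c : Prop} [Decidable c] {β : Type} {s : Finset β} (F : β → ℚ) :
    (if c then (∑ x ∈ s, F x) else 0) = ∑ x ∈ s, (if c then F x else 0) := by
  split <;> simp

end DMAux
namespace DMAux

lemma mWeight_ofFn (b lam : ℕ → ℚ) {K : ℕ} (m : Fin K → MStep) :
    mWeight b lam (List.ofFn m)
      = ∏ i : Fin K, (match m i with
        | MStep.up => (1 : ℚ)
        | MStep.flat => b (mHeight (List.ofFn m) ((i : ℕ) + 1)).toNat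
        | MStep.down => lam (mHeight (List.ofFn m) ((i : ℕ) + 1)).toNat) := by
  unfold mWeight
  rw [List.length_ofFn, ← Fin.prod_univ_eq_prod_range]
  apply Finset.prod_congr rfl
  intro i _
  rw [getD_ofFn m MStep.up i]

section
variable (d : ℕ → ℚ) (hd0 : d 0 = 1)
    (hdodd : ∀ m : ℕ, 1 ≤ m →
      d (2 * m - 1) = (fibZ (2 * (m : ℤ) - 1) : ℚ) / (fibZ (2 * (m : ℤ) - 3) : ℚ))
    (hdeven : ∀ m : ℕ, 1 ≤ m →
      d (2 * m) = (fibZ (2 * (m : ℤ) - 3) : ℚ) / (fibZ (2 * (m : ℤ) - 1) : ℚ))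

include hd0 hdodd hdeven in
lemma KI (s : MStep) (h : ℕ) :
    (∑ p : P, if pi2 p = s then pw d p h else 0)
      = (match s with
         | MStep.up => (1 : ℚ)
         | MStep.flat => if h = 0 then 2 else 3
         | MStep.down => 1) := by
  rw [Fintype.sum_prod_type, sum_DStep, sum_DStep, sum_DStep]
  cases s
  · simp [pi2, pw]
  · simp only [pi2, pw]
    simp
    exact d_downpair d hdodd hdeven h
  · simp only [pi2, pw]
    simp
    exact d_flat d hd0 hdodd hdeven h
end

end DMAux
/-- With `α = (2,3,3,…)` and `β = (1,1,…)`, `Dyck_n(d) = Mot_{n-1}(α, β)` for `n ≥ 1`. -/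
theorem dyck_d_eq_motzkin_two_three
(d : ℕ → ℚ) (hd0 : d 0 = 1)
    (hdodd : ∀ m : ℕ, 1 ≤ m →
      d (2 * m - 1) = (fibZ (2 * (m : ℤ) - 1) : ℚ) / (fibZ (2 * (m : ℤ) - 3) : ℚ))
    (hdeven : ∀ m : ℕ, 1 ≤ m →
      d (2 * m) = (fibZ (2 * (m : ℤ) - 3) : ℚ) / (fibZ (2 * (m : ℤ) - 1) : ℚ))
    (n : ℕ) (hn : 1 ≤ n) :
    dyckSum n d = motSum (n - 1) (fun m => if m = 0 then 2 else 3) (fun _ => 1) := by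
  classical
  open DMAux in
  obtain ⟨K, rfl⟩ : ∃ K, n = K + 1 := ⟨n - 1, by omega⟩
  simp only [Nat.add_sub_cancel]
  -- Left side: reduce to a sum over sequences of step pairs
  have lhs1 : dyckSum (K + 1) d
      = ∑ g : Fin K → P,
          (if IsDyck (Fl (List.ofFn g)) then dWeight d (Fl (List.ofFn g)) else 0) := by
    have e0 : dyckSum (K + 1) d = ∑ f : Fin (2 * K + 1 + 1) → DStep,
        (if IsDyck (List.ofFn f) then dWeight d (List.ofFn f) else 0) := rfl
    rw [e0, sum_ofFn_succ (2 * K + 1) (fun l => if IsDyck l then dWeight d l else 0), sum_DStep]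
    have hdown : (∑ f : Fin (2 * K + 1) → DStep,
        (if IsDyck (DStep.down :: List.ofFn f) then dWeight d (DStep.down :: List.ofFn f)
          else 0)) = 0 :=
      Finset.sum_eq_zero (fun f _ => if_neg (not_isDyck_down_head _))
    rw [hdown, add_zero,
      sum_pairs K (fun l => if IsDyck (DStep.up :: l) then dWeight d (DStep.up :: l) else 0)]
    apply Finset.sum_congr rfl
    intro g _
    rw [sum_DStep]
    have hup : (if IsDyck (DStep.up :: (expand (List.ofFn g) ++ [DStep.up])) then
        dWeight d (DStep.up :: (expand (List.ofFn g) ++ [DStep.up])) else 0) = 0 := by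
      apply if_neg
      exact not_isDyck_up_last (DStep.up :: expand (List.ofFn g))
    rw [hup, zero_add]
    rfl
  rw [lhs1]
  -- Right side
  have rhs1 : motSum K (fun m => if m = 0 then 2 else 3) (fun _ => 1)
      = ∑ m : Fin K → MStep, ∑ g : Fin K → P,
          (if IsMotzkin (List.ofFn m) then
            ∏ i : Fin K, (if pi2 (g i) = m i then
              pw d (g i) ((mHeight (List.ofFn m) ((i : ℕ) + 1)).toNat) else 0)
          else 0) := by
    unfold motSum
    apply Finset.sum_congr rfl
    intro m _
    rw [mWeight_ofFn]
    rw [show (∏ i : Fin K, (match m i with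
        | MStep.up => (1 : ℚ)
        | MStep.flat => (fun h => if h = 0 then (2:ℚ) else 3)
            (mHeight (List.ofFn m) ((i : ℕ) + 1)).toNat
        | MStep.down => (fun _ => (1:ℚ)) (mHeight (List.ofFn m) ((i : ℕ) + 1)).toNat))
      = ∏ i : Fin K, ∑ p : P, (if pi2 p = m i then
          pw d p ((mHeight (List.ofFn m) ((i : ℕ) + 1)).toNat) else 0) from
      Finset.prod_congr rfl (fun i _ => by
        rw [KI d hd0 hdodd hdeven (m i) ((mHeight (List.ofFn m) ((i : ℕ) + 1)).toNat)])]
    rw [prod_sum_exchange K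
      (fun i p => if pi2 p = m i then
        pw d p ((mHeight (List.ofFn m) ((i : ℕ) + 1)).toNat) else 0)]
    rw [ite_sum]
  rw [rhs1, Finset.sum_comm]
  apply Finset.sum_congr rfl
  intro g _
  -- collapse the inner sum over m to the single contracted path
  rw [Finset.sum_eq_single (fun i => pi2 (g i))]
  · have hmap : List.ofFn (fun i => pi2 (g i)) = (List.ofFn g).map pi2 := by
      rw [List.map_ofFn]
      exact congrArg _ (funext fun i => rfl)
    by_cases hDM : IsMotzkin ((List.ofFn g).map pi2)
    · rw [if_pos ((isDyck_Fl_iff _).mpr hDM)]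
      rw [if_pos (by rw [hmap]; exact hDM)]
      rw [dWeight_Fl d (List.ofFn g) hDM hd0, List.length_ofFn,
        ← Fin.prod_univ_eq_prod_range]
      apply Finset.prod_congr rfl
      intro i _
      rw [if_pos rfl, hmap, getD_ofFn g dp i]
    · rw [if_neg (fun hD => hDM ((isDyck_Fl_iff _).mp hD)),
        if_neg (by rw [hmap]; exact hDM)]
  · intro m _ hm
    obtain ⟨i, hi⟩ := Function.ne_iff.mp hm
    have hz : (∏ i : Fin K, (if pi2 (g i) = m i then
        pw d (g i) ((mHeight (List.ofFn m) ((i : ℕ) + 1)).toNat) else 0)) = 0 :=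
      Finset.prod_eq_zero (Finset.mem_univ i) (if_neg (fun e => hi (e.symm)))
    rw [hz, ite_self]
  · intro h
    exact absurd (Finset.mem_univ _) h
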